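/- arXiv:1512.06372 — 2 statements merged into one kernel-verified Lean document; each statement's English description precedes it below -/
import Mathlib

section
/- Let G=(V,E) be a finite graph with thresholds t:V→ℕ satisfying 1 ≤ t(v) ≤ d_G(v) for all v, and let G'=(V',E') be the gadget graph of G. If S ⊆ V is a target set for G, then the incentive vector s on V' defined by s(u) = 1 if u = v'' for some v ∈ S and s(u) = 0 otherwise is a target vector for G' with cost C(s) = Σ_{u∈V'} s(u) = |S|. -/
/-- Vertices of the gadget graph `G'` of `G`: for each `v ∈ V` the gadget `Λ_v` has
vertex set `{v', v'', v_1, …, v_{d_G(v)}}`, encoded as `Σ v : V, Fin (d_G(v) + 2)`,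
where index `0` encodes `v'`, index `1` encodes `v''`, and indices `2, …, d_G(v)+1`
encode the internal vertices `v_1, …, v_{d_G(v)}`. -/
abbrev GadgetVert {V : Type*} [Fintype V] (G : SimpleGraph V) [DecidableRel G.Adj] : Type _ :=
  Σ v : V, Fin (G.degree v + 2)

/-- Adjacency of the gadget graph: `u'` and `w'` are adjacent whenever `u` and `w` are
adjacent in `G`; inside each gadget `Λ_v`, the vertices `v'` and `v''` are joined by the
internally disjoint paths `(v', v_i, v'')`, `i = 1, …, d_G(v)`. -/
def gadgetAdj {V : Type*} [Fintype V] (G : SimpleGraph V) [DecidableRel G.Adj]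
    (a b : GadgetVert G) : Prop :=
  ((a.2 : ℕ) = 0 ∧ (b.2 : ℕ) = 0 ∧ G.Adj a.1 b.1) ∨
  (a.1 = b.1 ∧
    (((a.2 : ℕ) = 0 ∧ 2 ≤ (b.2 : ℕ)) ∨ (2 ≤ (a.2 : ℕ) ∧ (b.2 : ℕ) = 0) ∨
     ((a.2 : ℕ) = 1 ∧ 2 ≤ (b.2 : ℕ)) ∨ (2 ≤ (a.2 : ℕ) ∧ (b.2 : ℕ) = 1)))

instance gadgetAdj.decidable {V : Type*} [Fintype V] [DecidableEq V]
    (G : SimpleGraph V) [DecidableRel G.Adj] : DecidableRel (gadgetAdj G) := fun a b => by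
  unfold gadgetAdj; infer_instance

/-- The gadget graph `G'` of `G`. -/
def gadgetGraph {V : Type*} [Fintype V] (G : SimpleGraph V) [DecidableRel G.Adj] :
    SimpleGraph (GadgetVert G) where
  Adj := gadgetAdj G
  symm := by
    constructor
    rintro ⟨v, i⟩ ⟨u, j⟩ (⟨hi, hj, hadj⟩ | ⟨rfl, h⟩)
    · exact Or.inl ⟨hj, hi, hadj.symm⟩
    · exact Or.inr ⟨rfl, by tauto⟩
  loopless := by
    constructor
    rintro ⟨v, i⟩ (⟨_, _, hadj⟩ | ⟨_, h⟩)
    · exact G.loopless.irrefl v hadj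
    · omega

instance {V : Type*} [Fintype V] [DecidableEq V] (G : SimpleGraph V) [DecidableRel G.Adj] :
    DecidableRel (gadgetGraph G).Adj :=
  fun a b => inferInstanceAs (Decidable (gadgetAdj G a b))

/-- The thresholds on the gadget graph: `v'` keeps the threshold `t v` of `v`, every
other vertex of the gadget `Λ_v` has threshold `1`. -/
def gadgetThreshold {V : Type*} [Fintype V] (G : SimpleGraph V) [DecidableRel G.Adj]
    (t : V → ℕ) (a : GadgetVert G) : ℕ :=
  if (a.2 : ℕ) = 0 then t a.1 else 1

/-- `activeVec G t s ℓ` : the set of vertices active at round `ℓ` of the activation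
process in `G` with thresholds `t`, starting with partial incentives `s`. -/
def activeVec {V : Type*} [Fintype V] [DecidableEq V] (G : SimpleGraph V) [DecidableRel G.Adj]
    (t s : V → ℕ) : ℕ → Finset V
  | 0 => Finset.univ.filter fun v => t v ≤ s v
  | ℓ + 1 =>
    activeVec G t s ℓ ∪
      Finset.univ.filter fun u => t u - s u ≤ (G.neighborFinset u ∩ activeVec G t s ℓ).card

/-- `s` is a target vector for `G` with thresholds `t`. -/
def isTargetVec {V : Type*} [Fintype V] [DecidableEq V] (G : SimpleGraph V) [DecidableRel G.Adj]
    (t s : V → ℕ) : Prop :=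
  ∃ ℓ, activeVec G t s ℓ = Finset.univ

/-- `activeSet G t S ℓ` : the set of vertices active at round `ℓ` of the activation
process in `G` with thresholds `t`, starting at the seed set `S`. -/
def activeSet {V : Type*} [Fintype V] [DecidableEq V] (G : SimpleGraph V) [DecidableRel G.Adj]
    (t : V → ℕ) (S : Finset V) : ℕ → Finset V
  | 0 => S
  | ℓ + 1 =>
    activeSet G t S ℓ ∪
      Finset.univ.filter fun u => t u ≤ (G.neighborFinset u ∩ activeSet G t S ℓ).card

/-- `S` is a target set for `G` with thresholds `t`. -/
def isTargetSet {V : Type*} [Fintype V] [DecidableEq V] (G : SimpleGraph V) [DecidableRel G.Adj]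
    (t : V → ℕ) (S : Finset V) : Prop :=
  ∃ ℓ, activeSet G t S ℓ = Finset.univ


section Aux

set_option linter.unusedSectionVars false

variable {V : Type*} [Fintype V] [DecidableEq V] (G : SimpleGraph V) [DecidableRel G.Adj]

/-- The vertex `v'` of the gadget `Λ_v`. -/
def gvA (v : V) : GadgetVert G := ⟨v, ⟨0, by omega⟩⟩

/-- The vertex `v''` of the gadget `Λ_v`. -/
def gvB (v : V) : GadgetVert G := ⟨v, ⟨1, by omega⟩⟩

lemma gadget_adj_AA {u v : V} (h : G.Adj u v) : (gadgetGraph G).Adj (gvA G u) (gvA G v) :=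
  Or.inl ⟨rfl, rfl, h⟩

lemma gadget_adj_A_mid (v : V) (j : Fin (G.degree v + 2)) (hj : 2 ≤ (j : ℕ)) :
    (gadgetGraph G).Adj (gvA G v) ⟨v, j⟩ :=
  Or.inr ⟨rfl, Or.inl ⟨rfl, hj⟩⟩

lemma gadget_adj_B_mid (v : V) (j : Fin (G.degree v + 2)) (hj : 2 ≤ (j : ℕ)) :
    (gadgetGraph G).Adj (gvB G v) ⟨v, j⟩ :=
  Or.inr ⟨rfl, Or.inr (Or.inr (Or.inl ⟨rfl, hj⟩))⟩

lemma activeVec_subset_succ (t s : V → ℕ) (ℓ : ℕ) :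
    activeVec G t s ℓ ⊆ activeVec G t s (ℓ + 1) := by
  rw [activeVec]; exact Finset.subset_union_left

lemma activeVec_mono (t s : V → ℕ) {ℓ m : ℕ} (h : ℓ ≤ m) :
    activeVec G t s ℓ ⊆ activeVec G t s m := by
  induction m with
  | zero => simp_all
  | succ m ih =>
    rcases Nat.lt_or_ge ℓ (m + 1) with h' | h'
    · exact (ih (Nat.lt_succ_iff.mp h')).trans (activeVec_subset_succ G t s m)
    · have : ℓ = m + 1 := le_antisymm h h'
      subst this; exact subset_rfl

lemma mem_activeVec_succ (t s : V → ℕ) (ℓ : ℕ) {u : V}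
    (h : t u - s u ≤ (G.neighborFinset u ∩ activeVec G t s ℓ).card) :
    u ∈ activeVec G t s (ℓ + 1) := by
  rw [activeVec]
  exact Finset.mem_union_right _ (Finset.mem_filter.mpr ⟨Finset.mem_univ _, h⟩)

lemma mem_activeVec_zero (t s : V → ℕ) {u : V} (h : t u ≤ s u) :
    u ∈ activeVec G t s 0 := by
  rw [activeVec]; exact Finset.mem_filter.mpr ⟨Finset.mem_univ _, h⟩

end Aux

/-- If `S` is a target set for `G`, then the incentive vector on the gadget graph `G'`
assigning `1` to the vertex `v''` of each gadget `Λ_v` with `v ∈ S` and `0` to all other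
vertices is a target vector for `G'`, of cost `|S|`. -/
theorem target_set_to_gadget_target_vector {V : Type*} [Fintype V] [DecidableEq V]
    (G : SimpleGraph V) [DecidableRel G.Adj] (t : V → ℕ)
    (ht : ∀ v, 1 ≤ t v ∧ t v ≤ G.degree v)
    (S : Finset V) (hS : isTargetSet G t S) :
    isTargetVec (gadgetGraph G) (gadgetThreshold G t)
      (fun a => if (a.2 : ℕ) = 1 ∧ a.1 ∈ S then 1 else 0) ∧
    (∑ a : GadgetVert G, (if (a.2 : ℕ) = 1 ∧ a.1 ∈ S then 1 else 0)) = S.card := by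
  set G' := gadgetGraph G with hG'
  set t' := gadgetThreshold G t with ht'
  set s : GadgetVert G → ℕ := fun a => if (a.2 : ℕ) = 1 ∧ a.1 ∈ S then 1 else 0 with hs
  have hsA : ∀ v, s (gvA G v) = 0 := by intro v; simp [hs, gvA]
  have htA : ∀ v, t' (gvA G v) = t v := by intro v; simp [ht', gadgetThreshold, gvA]
  have hdeg : ∀ v, 1 ≤ G.degree v := fun v => le_trans (ht v).1 (ht v).2
  -- base: v'' for v ∈ S is active at round 0
  have hB0 : ∀ v ∈ S, gvB G v ∈ activeVec G' t' s 0 := by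
    intro v hv
    apply mem_activeVec_zero
    simp [ht', gadgetThreshold, hs, gvB, hv]
  -- internal vertices of gadgets of S active at round 1
  have hmid1 : ∀ v ∈ S, ∀ j : Fin (G.degree v + 2), 2 ≤ (j : ℕ) →
      (⟨v, j⟩ : GadgetVert G) ∈ activeVec G' t' s 1 := by
    intro v hv j hj
    apply mem_activeVec_succ
    have hmem : gvB G v ∈ G'.neighborFinset ⟨v, j⟩ ∩ activeVec G' t' s 0 := by
      refine Finset.mem_inter.mpr ⟨?_, hB0 v hv⟩
      rw [SimpleGraph.mem_neighborFinset]
      exact ((gadgetGraph G).adj_symm (gadget_adj_B_mid G v j hj))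
    have hcard : 1 ≤ (G'.neighborFinset ⟨v, j⟩ ∩ activeVec G' t' s 0).card :=
      Finset.card_pos.mpr ⟨_, hmem⟩
    have : t' ⟨v, j⟩ = 1 := by
      show (if (j : ℕ) = 0 then t v else 1) = 1; rw [if_neg (by omega)]
    omega
  -- v' for v ∈ S active at round 2
  have hA2 : ∀ v ∈ S, gvA G v ∈ activeVec G' t' s 2 := by
    intro v hv
    apply mem_activeVec_succ
    rw [hsA, htA, Nat.sub_zero]
    refine le_trans (ht v).2 ?_
    have := Finset.card_le_card_of_injOn
      (f := fun i : Fin (G.degree v) => (⟨v, ⟨(i : ℕ) + 2, by omega⟩⟩ : GadgetVert G))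
      (s := Finset.univ)
      (t := G'.neighborFinset (gvA G v) ∩ activeVec G' t' s 1)
      (fun i _ => by
        refine Finset.mem_inter.mpr ⟨?_, hmid1 v hv _ (by simp)⟩
        rw [SimpleGraph.mem_neighborFinset]
        exact gadget_adj_A_mid G v _ (by simp))
      (fun i _ i' _ h => by
        have := congrArg (fun a : GadgetVert G => (a.2 : ℕ)) h
        simp at this
        exact Fin.ext this)
    simpa using this
  -- main simulation
  have key : ∀ ℓ, ∀ v ∈ activeSet G t S ℓ, gvA G v ∈ activeVec G' t' s (3 * ℓ + 2) := by
    intro ℓ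
    induction ℓ with
    | zero => intro v hv; rw [activeSet] at hv; exact hA2 v hv
    | succ ℓ ih =>
      intro v hv
      rw [activeSet] at hv
      rcases Finset.mem_union.mp hv with hv | hv
      · exact activeVec_mono G' t' s (by omega) (ih v hv)
      · have hcard := (Finset.mem_filter.mp hv).2
        have step : gvA G v ∈ activeVec G' t' s (3 * ℓ + 3) := by
          apply mem_activeVec_succ
          rw [hsA, htA, Nat.sub_zero]
          refine le_trans hcard ?_
          refine Finset.card_le_card_of_injOn (fun u => gvA G u)
            (fun u hu => ?_) (fun u _ u' _ h => congrArg Sigma.fst h)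
          rcases Finset.mem_inter.mp hu with ⟨hu1, hu2⟩
          refine Finset.mem_inter.mpr ⟨?_, ih u hu2⟩
          rw [SimpleGraph.mem_neighborFinset]
          exact gadget_adj_AA G ((SimpleGraph.mem_neighborFinset G v u).mp hu1)
        exact activeVec_mono G' t' s (by omega) step
  obtain ⟨L, hL⟩ := hS
  have hAall : ∀ v, gvA G v ∈ activeVec G' t' s (3 * L + 2) := fun v =>
    key L v (hL ▸ Finset.mem_univ v)
  have hmidall : ∀ (v : V) (j : Fin (G.degree v + 2)), 2 ≤ (j : ℕ) →
      (⟨v, j⟩ : GadgetVert G) ∈ activeVec G' t' s (3 * L + 3) := by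
    intro v j hj
    apply mem_activeVec_succ
    have hmem : gvA G v ∈ G'.neighborFinset ⟨v, j⟩ ∩ activeVec G' t' s (3 * L + 2) := by
      refine Finset.mem_inter.mpr ⟨?_, hAall v⟩
      rw [SimpleGraph.mem_neighborFinset]
      exact (gadgetGraph G).adj_symm (gadget_adj_A_mid G v j hj)
    have hcard : 1 ≤ (G'.neighborFinset ⟨v, j⟩ ∩ activeVec G' t' s (3 * L + 2)).card :=
      Finset.card_pos.mpr ⟨_, hmem⟩
    have : t' ⟨v, j⟩ = 1 := by show (if (j : ℕ) = 0 then t v else 1) = 1; rw [if_neg (by omega)]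
    omega
  have hBall : ∀ v, gvB G v ∈ activeVec G' t' s (3 * L + 4) := by
    intro v
    apply mem_activeVec_succ
    have h2 : (2 : ℕ) < G.degree v + 2 := by have := hdeg v; omega
    have hmem : (⟨v, ⟨2, h2⟩⟩ : GadgetVert G) ∈
        G'.neighborFinset (gvB G v) ∩ activeVec G' t' s (3 * L + 3) := by
      refine Finset.mem_inter.mpr ⟨?_, hmidall v _ (by simp)⟩
      rw [SimpleGraph.mem_neighborFinset]
      exact gadget_adj_B_mid G v _ (by simp)
    have hcard : 1 ≤ (G'.neighborFinset (gvB G v) ∩ activeVec G' t' s (3 * L + 3)).card :=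
      Finset.card_pos.mpr ⟨_, hmem⟩
    have : t' (gvB G v) = 1 := by simp [ht', gadgetThreshold, gvB]
    omega
  constructor
  · refine ⟨3 * L + 4, Finset.eq_univ_iff_forall.mpr ?_⟩
    rintro ⟨v, j⟩
    by_cases h0 : (j : ℕ) = 0
    · have hj : j = (⟨0, by omega⟩ : Fin (G.degree v + 2)) := Fin.ext h0
      rw [hj]
      exact activeVec_mono G' t' s (by omega) (hAall v)
    · by_cases h1 : (j : ℕ) = 1
      · have hj : j = (⟨1, by omega⟩ : Fin (G.degree v + 2)) := Fin.ext h1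
        rw [hj]
        exact hBall v
      · exact activeVec_mono G' t' s (by omega) (hmidall v j (by omega))
  · rw [← Finset.univ_sigma_univ, Finset.sum_sigma]
    have h1 : ∀ v : V, (∑ j : Fin (G.degree v + 2),
        if ((j : ℕ) = 1 ∧ v ∈ S) then (1 : ℕ) else 0) = if v ∈ S then 1 else 0 := by
      intro v
      by_cases hv : v ∈ S
      · simp only [hv, and_true, if_pos]
        have hiff : ∀ j : Fin (G.degree v + 2),
            ((j : ℕ) = 1) ↔ j = (⟨1, by omega⟩ : Fin (G.degree v + 2)) := by
          intro j
          exact ⟨fun h => Fin.ext h, fun h => by subst h; rfl⟩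
        simp_rw [hiff]
        rw [Finset.sum_eq_single (⟨1, by omega⟩ : Fin (G.degree v + 2))] <;> simp +contextual
      · simp [hv]
    simp_rw [h1]
    simp [Finset.sum_ite_mem]
end

section
/- Let G=(V,E) be a finite graph with thresholds t:V→ℕ satisfying 1 ≤ t(v) ≤ d_G(v) for all v, and let G'=(V',E') be the gadget graph of G. If s is a target vector for G', then S = {v ∈ V : there exists u ∈ V'_v with s(u) > 0} is a target set for G, and |S| ≤ C(s) = Σ_{u∈V'} s(u). -/
lemma activeVec_mono' {V : Type*} [Fintype V] [DecidableEq V] (G : SimpleGraph V)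
    [DecidableRel G.Adj] (t s : V → ℕ) : Monotone (activeVec G t s) := by
  apply monotone_nat_of_le_succ
  intro n
  rw [activeVec]
  exact Finset.subset_union_left

lemma activeSet_mono' {V : Type*} [Fintype V] [DecidableEq V] (G : SimpleGraph V)
    [DecidableRel G.Adj] (t : V → ℕ) (S : Finset V) : Monotone (activeSet G t S) := by
  apply monotone_nat_of_le_succ
  intro n
  rw [activeSet]
  exact Finset.subset_union_left

/-- If `s` is a target vector for the gadget graph `G'`, then
`S = {v ∈ V : ∃ u ∈ V'_v, s(u) > 0}` is a target set for `G`, with `|S| ≤ ∑_{u∈V'} s(u)`. -/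
theorem gadget_target_vector_to_target_set {V : Type*} [Fintype V] [DecidableEq V]
    (G : SimpleGraph V) [DecidableRel G.Adj] (t : V → ℕ)
    (ht : ∀ v, 1 ≤ t v ∧ t v ≤ G.degree v)
    (s : GadgetVert G → ℕ)
    (hs : isTargetVec (gadgetGraph G) (gadgetThreshold G t) s) :
    isTargetSet G t
      (Finset.univ.filter fun v => ∃ i : Fin (G.degree v + 2), 0 < s ⟨v, i⟩) ∧
    (Finset.univ.filter fun v => ∃ i : Fin (G.degree v + 2), 0 < s ⟨v, i⟩).card ≤
      ∑ a : GadgetVert G, s a := by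
  classical
  set S : Finset V := Finset.univ.filter fun v => ∃ i : Fin (G.degree v + 2), 0 < s ⟨v, i⟩
    with hSdef
  have hs0 : ∀ (v : V) (i : Fin (G.degree v + 2)), v ∉ S → s ⟨v, i⟩ = 0 := by
    intro v i hv
    by_contra h
    exact hv (Finset.mem_filter.2 ⟨Finset.mem_univ _, ⟨i, Nat.pos_of_ne_zero h⟩⟩)
  set A' : ℕ → Finset (GadgetVert G) := activeVec (gadgetGraph G) (gadgetThreshold G t) s
    with hA'def
  set A : ℕ → Finset V := activeSet G t S with hAdef
  have hA0 : A 0 = S := rfl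
  have hA'0 : A' 0 = Finset.univ.filter (fun a => gadgetThreshold G t a ≤ s a) := rfl
  have hA'succ : ∀ n, A' (n + 1) = A' n ∪ (Finset.univ.filter fun u =>
      gadgetThreshold G t u - s u ≤ (((gadgetGraph G).neighborFinset u) ∩ A' n).card) :=
    fun n => rfl
  have hAsucc : ∀ n, A (n + 1) = A n ∪ (Finset.univ.filter fun u =>
      t u ≤ ((G.neighborFinset u) ∩ A n).card) := fun n => rfl
  have hth0 : ∀ v : V, gadgetThreshold G t (⟨v, 0⟩ : GadgetVert G) = t v := by
    intro v; simp [gadgetThreshold]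
  have hth1 : ∀ (v : V) (i : Fin (G.degree v + 2)), (i : ℕ) ≠ 0 →
      gadgetThreshold G t (⟨v, i⟩ : GadgetVert G) = 1 := by
    intro v i hi; simp [gadgetThreshold, hi]
  have main : ∀ ℓ, ∀ v : V, v ∉ S →
      ((⟨v, 0⟩ : GadgetVert G) ∈ A' ℓ → v ∈ A ℓ) ∧
      (∀ i : Fin (G.degree v + 2), 1 ≤ (i : ℕ) →
        (⟨v, i⟩ : GadgetVert G) ∈ A' ℓ → ∃ m < ℓ, (⟨v, 0⟩ : GadgetVert G) ∈ A' m) := by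
    intro ℓ
    induction ℓ with
    | zero =>
      intro v hv
      constructor
      · intro h
        rw [hA'0, Finset.mem_filter] at h
        have h1 := h.2
        rw [hth0 v, hs0 v 0 hv] at h1
        have := (ht v).1
        omega
      · intro i hi h
        exfalso
        rw [hA'0, Finset.mem_filter] at h
        have h1 := h.2
        have hne : (i : ℕ) ≠ 0 := by omega
        rw [hth1 v i hne, hs0 v i hv] at h1
        omega
    | succ ℓ ih =>
      intro v hv
      constructor
      · -- part (a)
        intro h
        rw [hA'succ, Finset.mem_union] at h
        rcases h with h | h
        · exact activeSet_mono' G t S (Nat.le_succ ℓ) ((ih v hv).1 h)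
        · rw [Finset.mem_filter] at h
          have hth := h.2
          rw [hth0 v, hs0 v 0 hv] at hth
          -- hth : t v - 0 ≤ card (N'(v') ∩ A' ℓ)
          by_cases hint : ∃ a ∈ (gadgetGraph G).neighborFinset ⟨v, 0⟩ ∩ A' ℓ, 1 ≤ (a.2 : ℕ)
          · obtain ⟨⟨u, j⟩, haT, hai⟩ := hint
            rw [Finset.mem_inter, SimpleGraph.mem_neighborFinset] at haT
            obtain ⟨hadj, hmem⟩ := haT
            rcases hadj with ⟨h0, hj0, _⟩ | ⟨huv, hopts⟩
            · have hj0' : (j : ℕ) = 0 := hj0; have hai' : 1 ≤ (j : ℕ) := hai; omega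
            · simp only at huv
              subst huv
              obtain ⟨m, hm, h0⟩ := (ih v hv).2 j hai hmem
              have h0' : (⟨v, 0⟩ : GadgetVert G) ∈ A' ℓ :=
                activeVec_mono' _ _ _ (Nat.le_of_lt hm) h0
              exact activeSet_mono' G t S (Nat.le_succ ℓ) ((ih v hv).1 h0')
          · push_neg at hint
            have hcard : t v ≤ (G.neighborFinset v ∩ A ℓ).card := by
              have hle : ((gadgetGraph G).neighborFinset ⟨v, 0⟩ ∩ A' ℓ).card ≤
                  (G.neighborFinset v ∩ A ℓ).card := by
                apply Finset.card_le_card_of_injOn (fun a => a.1)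
                · rintro ⟨u, j⟩ haT
                  have haT' := haT
                  rw [Finset.mem_coe, Finset.mem_inter, SimpleGraph.mem_neighborFinset] at haT'
                  obtain ⟨hadj, hmem⟩ := haT'
                  have hj1 : (j : ℕ) < 1 := hint _ haT
                  have hj0 : j = 0 := by
                    apply Fin.ext
                    simp only [Fin.val_zero]
                    omega
                  subst hj0
                  rcases hadj with ⟨_, _, hGadj⟩ | ⟨_, hopts⟩
                  · rw [Finset.mem_coe, Finset.mem_inter, SimpleGraph.mem_neighborFinset]
                    refine ⟨hGadj, ?_⟩
                    by_cases hu : u ∈ S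
                    · exact activeSet_mono' G t S (Nat.zero_le ℓ) (hA0 ▸ hu)
                    · exact (ih u hu).1 hmem
                  · exfalso
                    simp only [Fin.val_zero] at hopts
                    omega
                · rintro ⟨u, j⟩ haT ⟨u', j'⟩ haT' hfst
                  simp only at hfst
                  subst hfst
                  have hj : j = 0 := by
                    apply Fin.ext; have h2 : (j : ℕ) < 1 := hint _ haT; simp only [Fin.val_zero]; omega
                  have hj' : j' = 0 := by
                    apply Fin.ext; have h2 : (j' : ℕ) < 1 := hint _ haT'; simp only [Fin.val_zero]; omega
                  subst hj; subst hj'; rfl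
              omega
            rw [hAsucc, Finset.mem_union]
            right
            exact Finset.mem_filter.2 ⟨Finset.mem_univ _, hcard⟩
      · -- part (b)
        intro i hi h
        rw [hA'succ, Finset.mem_union] at h
        rcases h with h | h
        · obtain ⟨m, hm, h0⟩ := (ih v hv).2 i hi h
          exact ⟨m, Nat.lt_succ_of_lt hm, h0⟩
        · rw [Finset.mem_filter] at h
          have hth := h.2
          have hne : (i : ℕ) ≠ 0 := by omega
          rw [hth1 v i hne, hs0 v i hv] at hth
          have hpos : 0 < ((gadgetGraph G).neighborFinset ⟨v, i⟩ ∩ A' ℓ).card := by omega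
          obtain ⟨⟨u, j⟩, hb⟩ := Finset.card_pos.1 hpos
          rw [Finset.mem_inter, SimpleGraph.mem_neighborFinset] at hb
          obtain ⟨hadj, hmem⟩ := hb
          rcases hadj with ⟨h0, _, _⟩ | ⟨huv, hopts⟩
          · simp only at h0; omega
          · simp only at huv
            subst huv
            have hj : (j : ℕ) = 0 ∨ 1 ≤ (j : ℕ) := by omega
            rcases hj with hj | hj
            · have hj0 : j = 0 := by apply Fin.ext; simpa using hj
              subst hj0
              exact ⟨ℓ, Nat.lt_succ_self ℓ, hmem⟩
            · obtain ⟨m, hm, h0⟩ := (ih v hv).2 j hj hmem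
              exact ⟨m, Nat.lt_succ_of_lt hm, h0⟩
  constructor
  · -- target set
    obtain ⟨L, hL⟩ := hs
    refine ⟨L, ?_⟩
    rw [Finset.eq_univ_iff_forall]
    intro v
    by_cases hv : v ∈ S
    · exact activeSet_mono' G t S (Nat.zero_le L) (hA0 ▸ hv)
    · apply (main L v hv).1
      rw [hA'def, hL]
      exact Finset.mem_univ _
  · -- cardinality
    have hchoice : ∀ v ∈ S, ∃ i : Fin (G.degree v + 2), 0 < s ⟨v, i⟩ := by
      intro v hv
      exact (Finset.mem_filter.1 hv).2
    choose f hf using hchoice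
    calc S.card = ∑ v ∈ S.attach, 1 := by simp
      _ ≤ ∑ v ∈ S.attach, s ⟨v.1, f v.1 v.2⟩ :=
          Finset.sum_le_sum fun v _ => hf v.1 v.2
      _ = ∑ a ∈ S.attach.image (fun v => (⟨v.1, f v.1 v.2⟩ : GadgetVert G)), s a := by
          rw [Finset.sum_image]
          intro x _ y _ hxy
          have : x.1 = y.1 := congrArg Sigma.fst hxy
          exact Subtype.ext this
      _ ≤ ∑ a : GadgetVert G, s a :=
          Finset.sum_le_sum_of_subset (Finset.subset_univ _)
end
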